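/- Let β be the standard dot-product bilinear form on V (β(x,y) = Σᵢ xᵢyᵢ), which is nondegenerate, and for a subspace W ≤ V write W^⊥ for its orthogonal complement with respect to β. Let S1 = {a₁,…,a₉} and S2 = {b₁,…,b₉} each be nine 2-dimensional subspaces of V pairwise intersecting in the zero subspace (two maximal partial line spreads), and set Bⱼ = bⱼ^⊥ (a 3-dimensional subspace) for each j. Assume that no line aᵢ is contained in any plane Bⱼ. Then the 18 subspaces a₁,…,a₉, B₁,…,B₉ are pairwise distinct and any two of them are at subspace distance at least 3: the lines are pairwise at distance 4, the planes are pairwise at distance 4, and each line–plane pair is at distance at least 3. (This is the doubling construction S1 ∪ (S2)^⊥ of a (5,3)₂ subspace code of size 18.) -/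

import Mathlib

open Module

/-- the doubling construction: Let β be the standard dot-product bilinear
form on `V = Fin 5 → ZMod 2` and `W^⊥` the β-orthogonal complement. Let S1 = {a₁,…,a₉}
and S2 = {b₁,…,b₉} be two maximal partial line spreads, and Bⱼ = bⱼ^⊥ the (3-dim) dual
planes. If no line aᵢ is contained in any plane Bⱼ, then the 18 subspaces a₁,…,a₉,
B₁,…,B₉ are pairwise distinct and pairwise at subspace distance at least 3: lines are
pairwise at distance 4, planes are pairwise at distance 4, and each line–plane pair is
at distance at least 3. -/
theorem stmt_14
    (β : LinearMap.BilinForm (ZMod 2) (Fin 5 → ZMod 2))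
    (hβ : ∀ x y : Fin 5 → ZMod 2, β x y = ∑ i, x i * y i)
    (a b : Fin 9 → Submodule (ZMod 2) (Fin 5 → ZMod 2))
    (haLines : ∀ i, finrank (ZMod 2) (a i) = 2)
    (hadisj : ∀ i j, i ≠ j → a i ⊓ a j = ⊥)
    (hbLines : ∀ j, finrank (ZMod 2) (b j) = 2)
    (hbdisj : ∀ i j, i ≠ j → b i ⊓ b j = ⊥)
    (B : Fin 9 → Submodule (ZMod 2) (Fin 5 → ZMod 2))
    (hB : ∀ j, B j = β.orthogonal (b j))
    (hnotle : ∀ i j, ¬ a i ≤ B j) :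
    (∀ j, finrank (ZMod 2) (B j) = 3) ∧
    (∀ i j, i ≠ j → a i ≠ a j) ∧
    (∀ i j, i ≠ j → B i ≠ B j) ∧
    (∀ i j, a i ≠ B j) ∧
    (∀ i j, i ≠ j →
      finrank (ZMod 2) (a i) + finrank (ZMod 2) (a j)
        - 2 * finrank (ZMod 2) ↥(a i ⊓ a j) = 4) ∧
    (∀ i j, i ≠ j →
      finrank (ZMod 2) (B i) + finrank (ZMod 2) (B j)
        - 2 * finrank (ZMod 2) ↥(B i ⊓ B j) = 4) ∧
    (∀ i j, 3 ≤ finrank (ZMod 2) (a i) + finrank (ZMod 2) (B j)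
        - 2 * finrank (ZMod 2) ↥(a i ⊓ B j)) := by
  have hV : finrank (ZMod 2) (Fin 5 → ZMod 2) = 5 := by simp
  have hsymm : β.IsSymm := by
    constructor; intro x y; simp only [hβ, RingHom.id_apply]
    exact Finset.sum_congr rfl fun i _ => mul_comm _ _
  have hrefl : β.IsRefl := hsymm.isRefl
  have hnd : β.Nondegenerate := by
    apply LinearMap.BilinForm.Nondegenerate.ofSeparatingLeft
    intro x hx
    funext i
    have := hx (Pi.single i 1)
    rw [hβ] at this
    simpa [Pi.single_apply, Finset.sum_ite_eq'] using this
  -- dim of orthogonals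
  have hdim : ∀ W : Submodule (ZMod 2) (Fin 5 → ZMod 2),
      finrank (ZMod 2) (β.orthogonal W) = 5 - finrank (ZMod 2) W := by
    intro W
    rw [LinearMap.BilinForm.finrank_orthogonal hnd, hV]
  have hBdim : ∀ j, finrank (ZMod 2) (B j) = 3 := by
    intro j; rw [hB, hdim, hbLines]
  -- orthogonal of sup
  have horthsup : ∀ U W : Submodule (ZMod 2) (Fin 5 → ZMod 2),
      β.orthogonal (U ⊔ W) = β.orthogonal U ⊓ β.orthogonal W := by
    intro U W
    apply le_antisymm
    · exact le_inf (fun x hx y hy => hx y (le_sup_left (a := U) (b := W) hy))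
        (fun x hx y hy => hx y (le_sup_right (a := U) (b := W) hy))
    · rintro x ⟨h1, h2⟩ y hy
      obtain ⟨u, hu, v, hv, rfl⟩ := Submodule.mem_sup.mp hy
      have hux := h1 u hu
      have hvx := h2 v hv
      simp [hux, hvx]
  have hBinf : ∀ i j, i ≠ j → finrank (ZMod 2) ↥(B i ⊓ B j) = 1 := by
    intro i j hij
    have hsup : finrank (ZMod 2) ↥(b i ⊔ b j) = 4 := by
      have := Submodule.finrank_sup_add_finrank_inf_eq (b i) (b j)
      rw [hbdisj i j hij, finrank_bot] at this
      rw [hbLines, hbLines] at this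
      omega
    rw [hB, hB, ← horthsup, hdim, hsup]
  have haBinf : ∀ i j, finrank (ZMod 2) ↥(a i ⊓ B j) ≤ 1 := by
    intro i j
    by_contra h
    push_neg at h
    have hle : finrank (ZMod 2) ↥(a i ⊓ B j) ≤ 2 := by
      have := Submodule.finrank_mono (inf_le_left (a := a i) (b := B j))
      rw [haLines] at this; exact this
    have h2 : finrank (ZMod 2) ↥(a i ⊓ B j) = 2 := by omega
    have : a i ⊓ B j = a i := by
      apply Submodule.eq_of_le_of_finrank_le inf_le_left
      rw [haLines, h2]
    exact hnotle i j (this ▸ inf_le_right)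
  refine ⟨hBdim, ?_, ?_, ?_, ?_, ?_, ?_⟩
  · intro i j hij h
    have h0 := hadisj i j hij
    rw [h, inf_idem] at h0
    have h1 := haLines j
    rw [h0, finrank_bot] at h1
    exact absurd h1 (by norm_num)
  · intro i j hij h
    have h2 : b i = b j := by
      have := congrArg β.orthogonal h
      rwa [hB, hB, LinearMap.BilinForm.orthogonal_orthogonal hnd hrefl,
        LinearMap.BilinForm.orthogonal_orthogonal hnd hrefl] at this
    have := hbdisj i j hij
    rw [h2, inf_idem] at this
    have h3 := hbLines j
    rw [this, finrank_bot] at h3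
    exact absurd h3 (by norm_num)
  · intro i j h
    have := hBdim j
    rw [← h, haLines] at this
    exact absurd this (by norm_num)
  · intro i j hij
    rw [haLines, haLines, hadisj i j hij, finrank_bot]
  · intro i j hij
    rw [hBdim, hBdim, hBinf i j hij]
  · intro i j
    have := haBinf i j
    rw [haLines, hBdim]
    omega
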